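/- arXiv:2112.12173 — 4 statements merged into one kernel-verified Lean document; each statement's English description precedes it below -/
import Mathlib

section
/- Let H = (V, E) be a hypergraph such that (i) every hyperedge intersects at most Γ other hyperedges, and (ii) for every hyperedge E ∈ E, r ≤ |E| ≤ c·r, where c ≥ 1 is an integer and r = max(2^12, ⌈136·ln(16Γ)⌉). Then H has a conflict-free coloring using at most 32·c·r colors, i.e., χ_CF(H) ≤ 32cr. -/
open Finset

lemma indep_count {ι X : Type} [Fintype ι] [DecidableEq ι] [DecidableEq X] [Fintype X]
    (s : Finset ι) (A B : Finset (ι → X))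
    (hA : ∀ ω σ : ι → X, (∀ i ∈ s, ω i = σ i) → (ω ∈ A ↔ σ ∈ A))
    (hB : ∀ ω σ : ι → X, (∀ i ∉ s, ω i = σ i) → (ω ∈ B ↔ σ ∈ B)) :
    ((A ∩ B).card) * (Finset.univ : Finset (ι → X)).card = A.card * B.card := by
  rw [← Finset.card_product, ← Finset.card_product]
  apply Finset.card_nbij' (fun p => (s.piecewise p.1 p.2, s.piecewise p.2 p.1))
      (fun p => (s.piecewise p.1 p.2, s.piecewise p.2 p.1))
  · rintro ⟨ω, σ⟩ hp
    simp only [Finset.mem_coe, Finset.mem_product, Finset.mem_inter] at hp ⊢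
    obtain ⟨⟨hA1, hB1⟩, -⟩ := hp
    constructor
    · exact (hA _ ω (fun i hi => s.piecewise_eq_of_mem _ _ hi)).mpr hA1
    · exact (hB _ ω (fun i hi => s.piecewise_eq_of_notMem _ _ hi)).mpr hB1
  · rintro ⟨ω, σ⟩ hp
    simp only [Finset.mem_coe, Finset.mem_product, Finset.mem_inter] at hp ⊢
    obtain ⟨hA1, hB1⟩ := hp
    refine ⟨⟨?_, ?_⟩, Finset.mem_univ _⟩
    · exact (hA _ ω (fun i hi => s.piecewise_eq_of_mem _ _ hi)).mpr hA1
    · exact (hB _ σ (fun i hi => s.piecewise_eq_of_notMem _ _ hi)).mpr hB1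
  · rintro ⟨ω, σ⟩ -
    simp only [Prod.mk.injEq]
    constructor <;> (funext i; by_cases hi : i ∈ s <;>
      simp [Finset.piecewise_eq_of_mem, Finset.piecewise_eq_of_notMem, hi])
  · rintro ⟨ω, σ⟩ -
    simp only [Prod.mk.injEq]
    constructor <;> (funext i; by_cases hi : i ∈ s <;>
      simp [Finset.piecewise_eq_of_mem, Finset.piecewise_eq_of_notMem, hi])

def avoidSet {Ω ι : Type} [Fintype Ω] [DecidableEq Ω] (Bad : ι → Finset Ω)
    (S : Finset ι) : Finset Ω :=
  Finset.univ.filter fun ω => ∀ j ∈ S, ω ∉ Bad j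

lemma mem_avoidSet {Ω ι : Type} [Fintype Ω] [DecidableEq Ω] {Bad : ι → Finset Ω}
    {S : Finset ι} {ω : Ω} : ω ∈ avoidSet Bad S ↔ ∀ j ∈ S, ω ∉ Bad j := by
  simp [avoidSet]

lemma avoidSet_anti {Ω ι : Type} [Fintype Ω] [DecidableEq Ω] {Bad : ι → Finset Ω}
    {S S' : Finset ι} (h : S ⊆ S') : avoidSet Bad S' ⊆ avoidSet Bad S := by
  intro ω hω
  rw [mem_avoidSet] at hω ⊢
  exact fun j hj => hω j (h hj)

lemma avoidSet_insert {Ω ι : Type} [Fintype Ω] [DecidableEq Ω] [DecidableEq ι]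
    {Bad : ι → Finset Ω} {S : Finset ι} {a : ι} :
    avoidSet Bad (insert a S) = avoidSet Bad S \ Bad a := by
  ext ω
  simp only [mem_avoidSet, Finset.mem_sdiff, Finset.mem_insert]
  constructor
  · intro h
    exact ⟨fun j hj => h j (Or.inr hj), h a (Or.inl rfl)⟩
  · rintro ⟨h1, h2⟩ j (rfl | hj)
    · exact h2
    · exact h1 j hj

lemma LLL_count {Ω ι : Type} [Fintype Ω] [DecidableEq Ω] [DecidableEq ι]
    (H : Finset ι) (Bad : ι → Finset Ω) (Γ : ℕ) (nbr : ι → ι → Prop) [DecidableRel nbr]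
    (hΩ : 0 < Fintype.card Ω)
    (hnbr : ∀ i ∈ H, (H.filter fun j => j ≠ i ∧ nbr i j).card ≤ Γ)
    (hind : ∀ i ∈ H, ∀ S ⊆ H, (∀ j ∈ S, j ≠ i ∧ ¬ nbr i j) →
      (Bad i ∩ avoidSet Bad S).card * Fintype.card Ω
        = (Bad i).card * (avoidSet Bad S).card)
    (hp : ∀ i ∈ H, (Bad i).card * (4 * (Γ + 1)) ≤ Fintype.card Ω) :
    ∃ ω : Ω, ∀ i ∈ H, ω ∉ Bad i := by
  classical
  set x : ℝ := 1 / (2 * (Γ + 1)) with hx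
  have hx0 : 0 < x := by positivity
  have hx1 : x ≤ 1 / 2 := by
    rw [hx]
    rw [div_le_div_iff₀ (by positivity) (by norm_num)]
    nlinarith [Nat.cast_nonneg (α := ℝ) Γ]
  -- cardinality of avoidSet after inserting one more bad event
  have card_insert : ∀ (a : ι) (S : Finset ι),
      ((avoidSet Bad (insert a S)).card : ℝ)
        = (avoidSet Bad S).card - (Bad a ∩ avoidSet Bad S).card := by
    intro a S
    rw [avoidSet_insert]
    have h := Finset.card_sdiff_add_card_inter (avoidSet Bad S) (Bad a)
    have h2 : avoidSet Bad S ∩ Bad a = Bad a ∩ avoidSet Bad S := Finset.inter_comm _ _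
    rw [h2] at h
    have := congrArg (fun n : ℕ => (n : ℝ)) h
    push_cast at this
    linarith
  -- the main LLL claim, by strong induction on the size of S
  have claim : ∀ n : ℕ, ∀ S ⊆ H, S.card < n → ∀ i ∈ H, i ∉ S →
      ((Bad i ∩ avoidSet Bad S).card : ℝ) ≤ x * (avoidSet Bad S).card := by
    intro n
    induction n with
    | zero =>
      intro S _ h
      exact absurd h (Nat.not_lt_zero _)
    | succ n ih =>
      intro S hSH hcard i hiH hiS
      set S₁ : Finset ι := S.filter (fun j => nbr i j) with hS₁def
      set S₂ : Finset ι := S.filter (fun j => ¬ nbr i j) with hS₂def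
      have hS₁S : S₁ ⊆ S := Finset.filter_subset _ _
      have hS₂S : S₂ ⊆ S := Finset.filter_subset _ _
      have hunion : S₂ ∪ S₁ = S := by
        rw [Finset.union_comm]
        exact Finset.filter_union_filter_not_eq _ S
      -- peeling off the neighbours one at a time
      have peel : ∀ T, T ⊆ S₁ →
          (1 - T.card * x) * ((avoidSet Bad S₂).card : ℝ)
            ≤ (avoidSet Bad (S₂ ∪ T)).card := by
        intro T
        induction T using Finset.induction_on with
        | empty => intro _; simp
        | @insert a T ha ihT =>
          intro hsub
          have haS₁ : a ∈ S₁ := hsub (Finset.mem_insert_self a T)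
          have hTsub : T ⊆ S₁ := fun t ht => hsub (Finset.mem_insert_of_mem ht)
          have hih := ihT hTsub
          -- a is not in S₂ ∪ T
          have haT : a ∉ S₂ ∪ T := by
            simp only [Finset.mem_union]
            rintro (h | h)
            · rw [hS₂def] at h
              rw [hS₁def] at haS₁
              simp only [Finset.mem_filter] at h haS₁
              exact h.2 haS₁.2
            · exact ha h
          have hsubH : S₂ ∪ T ⊆ H := by
            intro t ht
            rcases Finset.mem_union.mp ht with h | h
            · exact hSH (hS₂S h)
            · exact hSH (hS₁S (hTsub h))
          have hcard' : (S₂ ∪ T).card < n := by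
            have h1 : insert a (S₂ ∪ T) ⊆ S := by
              intro t ht
              rcases Finset.mem_insert.mp ht with rfl | ht'
              · exact hS₁S haS₁
              · rcases Finset.mem_union.mp ht' with h | h
                · exact hS₂S h
                · exact hS₁S (hTsub h)
            have h2 := Finset.card_le_card h1
            rw [Finset.card_insert_of_notMem haT] at h2
            omega
          have haH : a ∈ H := hSH (hS₁S haS₁)
          have hiha := ih (S₂ ∪ T) hsubH hcard' a haH haT
          have hkey := card_insert a (S₂ ∪ T)
          have hrw : S₂ ∪ insert a T = insert a (S₂ ∪ T) := Finset.union_insert a S₂ T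
          rw [hrw, Finset.card_insert_of_notMem ha]
          rw [hkey]
          push_cast
          have hA2nonneg : (0:ℝ) ≤ (avoidSet Bad S₂).card := Nat.cast_nonneg _
          have hAnonneg : (0:ℝ) ≤ (avoidSet Bad (S₂ ∪ T)).card := Nat.cast_nonneg _
          have h1x : (0:ℝ) ≤ 1 - x := by linarith
          have hmul := mul_le_mul_of_nonneg_left hih h1x
          have htx2 : (0:ℝ) ≤ (T.card : ℝ) * (x * x) * (avoidSet Bad S₂).card :=
            mul_nonneg (mul_nonneg (Nat.cast_nonneg _) (mul_self_nonneg x)) hA2nonneg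
          nlinarith [hmul, hiha, htx2]
      have hS₁card : S₁.card ≤ Γ := by
        refine le_trans (Finset.card_le_card ?_) (hnbr i hiH)
        intro j hj
        rw [hS₁def] at hj
        simp only [Finset.mem_filter] at hj ⊢
        exact ⟨hSH hj.1, fun h => hiS (h ▸ hj.1), hj.2⟩
      have hpeel := peel S₁ (Finset.Subset.refl _)
      rw [hunion] at hpeel
      -- 1 - |S₁| x ≥ 1/2
      have hhalf : (1:ℝ)/2 ≤ 1 - S₁.card * x := by
        have h1 : (S₁.card : ℝ) ≤ Γ := Nat.cast_le.mpr hS₁card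
        have h2 : (S₁.card : ℝ) * x ≤ Γ * x := by nlinarith
        have h3 : (Γ:ℝ) * x ≤ 1/2 := by
          rw [hx]
          rw [mul_one_div, div_le_div_iff₀ (by positivity) (by norm_num)]
          nlinarith [Nat.cast_nonneg (α := ℝ) Γ]
        linarith
      -- conditional bound on S₂
      have hS₂H : S₂ ⊆ H := fun t ht => hSH (hS₂S ht)
      have hS₂good : ∀ j ∈ S₂, j ≠ i ∧ ¬ nbr i j := by
        intro j hj
        rw [hS₂def] at hj
        simp only [Finset.mem_filter] at hj
        exact ⟨fun h => hiS (h ▸ hj.1), hj.2⟩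
      have hind2 := hind i hiH S₂ hS₂H hS₂good
      have hp2 := hp i hiH
      have hbound2 : ((Bad i ∩ avoidSet Bad S₂).card : ℝ) * (4 * (Γ + 1))
          ≤ (avoidSet Bad S₂).card := by
        have hΩR : (0:ℝ) < Fintype.card Ω := by exact_mod_cast hΩ
        rw [← mul_le_mul_iff_of_pos_right hΩR]
        have e1 : ((Bad i ∩ avoidSet Bad S₂).card : ℝ) * Fintype.card Ω
            = (Bad i).card * (avoidSet Bad S₂).card := by exact_mod_cast hind2
        have e2 : ((Bad i).card : ℝ) * (4 * (Γ + 1)) ≤ Fintype.card Ω := by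
          exact_mod_cast hp2
        calc ((Bad i ∩ avoidSet Bad S₂).card : ℝ) * (4 * (Γ + 1)) * Fintype.card Ω
            = ((Bad i ∩ avoidSet Bad S₂).card : ℝ) * Fintype.card Ω * (4 * (Γ + 1)) := by ring
          _ = (Bad i).card * (avoidSet Bad S₂).card * (4 * (Γ + 1)) := by rw [e1]
          _ = ((Bad i).card * (4 * (Γ + 1))) * (avoidSet Bad S₂).card := by ring
          _ ≤ Fintype.card Ω * (avoidSet Bad S₂).card := by
              apply mul_le_mul_of_nonneg_right e2 (Nat.cast_nonneg _)
          _ = ((avoidSet Bad S₂).card : ℝ) * Fintype.card Ω := by ring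
      have hmono : (Bad i ∩ avoidSet Bad S).card ≤ (Bad i ∩ avoidSet Bad S₂).card := by
        apply Finset.card_le_card
        exact Finset.inter_subset_inter (Finset.Subset.refl _) (avoidSet_anti hS₂S)
      have hmonoR : ((Bad i ∩ avoidSet Bad S).card : ℝ)
          ≤ (Bad i ∩ avoidSet Bad S₂).card := Nat.cast_le.mpr hmono
      -- combine
      have hG1 : (0:ℝ) < 4 * ((Γ:ℝ) + 1) := by positivity
      have hxeq : x * (4 * ((Γ:ℝ) + 1)) = 2 := by
        rw [hx]; field_simp; ring
      have hA2nonneg : (0:ℝ) ≤ (avoidSet Bad S₂).card := Nat.cast_nonneg _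
      -- |Bad i ∩ A S| ≤ |A S₂| / (4(Γ+1)) and |A S₂| ≤ 2 |A S|
      have h2AS : ((avoidSet Bad S₂).card : ℝ) ≤ 2 * (avoidSet Bad S).card := by
        nlinarith [hpeel, hhalf]
      nlinarith [hmonoR, hbound2, h2AS, hx0.le]
  -- positivity of avoidSet
  have pos : ∀ S ⊆ H, (0:ℝ) < (avoidSet Bad S).card := by
    intro S
    induction S using Finset.induction_on with
    | empty =>
      intro _
      have : avoidSet Bad (∅ : Finset ι) = Finset.univ := by
        ext ω; simp [mem_avoidSet]
      rw [this]
      simp only [Finset.card_univ]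
      exact_mod_cast hΩ
    | @insert a S ha ihS =>
      intro hsub
      have haH : a ∈ H := hsub (Finset.mem_insert_self a S)
      have hSH : S ⊆ H := fun t ht => hsub (Finset.mem_insert_of_mem ht)
      have hcl := claim (S.card + 1) S hSH (Nat.lt_succ_self _) a haH ha
      have hAS := ihS hSH
      rw [card_insert a S]
      nlinarith [hx1, hcl, hAS]
  have hposH := pos H (Finset.Subset.refl _)
  have : (avoidSet Bad H).Nonempty := by
    rw [← Finset.card_pos]
    exact_mod_cast hposH
  obtain ⟨ω, hω⟩ := this
  exact ⟨ω, mem_avoidSet.mp hω⟩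

lemma pow_self_le_exp_mul_factorial : ∀ m : ℕ, ((m:ℝ)) ^ m ≤ Real.exp m * m.factorial := by
  intro m
  induction m with
  | zero => simp
  | succ m ih =>
    rcases Nat.eq_zero_or_pos m with rfl | hm
    · have h1 : (1:ℝ) ≤ Real.exp 1 := by nlinarith [Real.add_one_le_exp (1:ℝ)]
      simpa using h1
    · have hm0 : (0:ℝ) < m := by exact_mod_cast hm
      have key : ((m:ℝ) + 1) ^ m ≤ Real.exp 1 * (m:ℝ) ^ m := by
        have h1 : (m:ℝ) + 1 ≤ m * Real.exp (1 / m) := by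
          have := Real.add_one_le_exp (1 / (m:ℝ))
          calc (m:ℝ) + 1 = m * (1/m + 1) := by field_simp; ring
            _ ≤ m * Real.exp (1/m) := by nlinarith
        calc ((m:ℝ) + 1) ^ m ≤ ((m:ℝ) * Real.exp (1/m)) ^ m := by
              apply pow_le_pow_left₀ (by positivity) h1
          _ = (m:ℝ) ^ m * Real.exp (1/m) ^ m := mul_pow _ _ _
          _ = (m:ℝ) ^ m * Real.exp (m * (1/m)) := by rw [Real.exp_nat_mul]
          _ = (m:ℝ) ^ m * Real.exp 1 := by
              rw [mul_one_div, div_self (ne_of_gt hm0)]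
          _ = Real.exp 1 * (m:ℝ) ^ m := mul_comm _ _
      have hfac : (0:ℝ) < m.factorial := by exact_mod_cast m.factorial_pos
      rw [Nat.factorial_succ]
      push_cast
      calc ((m:ℝ) + 1) ^ (m + 1) = ((m:ℝ) + 1) * ((m:ℝ) + 1) ^ m := by ring
        _ ≤ ((m:ℝ) + 1) * (Real.exp 1 * (m:ℝ) ^ m) := by
            apply mul_le_mul_of_nonneg_left key (by positivity)
        _ ≤ ((m:ℝ) + 1) * (Real.exp 1 * (Real.exp m * m.factorial)) := by
            apply mul_le_mul_of_nonneg_left _ (by positivity)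
            apply mul_le_mul_of_nonneg_left ih (Real.exp_pos 1).le
        _ = Real.exp 1 * Real.exp m * (((m:ℝ) + 1) * m.factorial) := by ring
        _ = Real.exp ((m:ℝ) + 1) * (((m:ℝ) + 1) * m.factorial) := by
            rw [← Real.exp_add]; ring_nf

lemma exp_nat_le_four_pow (m : ℕ) : Real.exp m ≤ (4:ℝ) ^ m := by
  have h1 : Real.exp (m : ℝ) = Real.exp 1 ^ m := by
    rw [← Real.exp_nat_mul, mul_one]
  rw [h1]
  apply pow_le_pow_left₀ (Real.exp_pos 1).le
  exact le_trans Real.exp_one_lt_d9.le (by norm_num)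

lemma numeric_bound (N k m d Γ r : ℕ) (hkmd : k = m + d) (hmd : m ≤ d) (hk2d : k ≤ 2 * d)
    (hrk : r ≤ k) (hN : 64 * m ≤ N) (hΓ : (4:ℝ) * ((Γ:ℝ) + 1) ≤ 4 ^ r) :
    (N.choose m : ℝ) * (m:ℝ) ^ k * (4 * ((Γ:ℝ) + 1)) ≤ (N:ℝ) ^ k := by
  have hfac : (0:ℝ) < m.factorial := by exact_mod_cast m.factorial_pos
  have hchoose : (N.choose m : ℝ) ≤ (N:ℝ) ^ m / m.factorial := by
    exact_mod_cast Nat.choose_le_pow_div m N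
  have hexp : (m:ℝ) ^ m / m.factorial ≤ Real.exp m := by
    rw [div_le_iff₀ hfac]
    exact pow_self_le_exp_mul_factorial m
  have h4k16d : (4:ℝ) ^ k ≤ 16 ^ d := by
    calc (4:ℝ) ^ k ≤ 4 ^ (2 * d) := by
          apply pow_le_pow_right₀ (by norm_num) hk2d
      _ = 16 ^ d := by rw [pow_mul]; norm_num
  have h4rk : (4:ℝ) ^ r ≤ 4 ^ k := pow_le_pow_right₀ (by norm_num) hrk
  have hexpd : Real.exp m ≤ (4:ℝ) ^ d :=
    le_trans (exp_nat_le_four_pow m) (pow_le_pow_right₀ (by norm_num) hmd)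
  have hG : (0:ℝ) ≤ 4 * ((Γ:ℝ) + 1) := by positivity
  calc (N.choose m : ℝ) * (m:ℝ) ^ k * (4 * ((Γ:ℝ) + 1))
      ≤ ((N:ℝ) ^ m / m.factorial) * (m:ℝ) ^ k * (4 ^ r) := by
        apply mul_le_mul (mul_le_mul_of_nonneg_right hchoose (by positivity))
          (le_trans hΓ (le_refl _)) hG (by positivity)
    _ = (N:ℝ) ^ m * (((m:ℝ) ^ m / m.factorial) * (m:ℝ) ^ d) * 4 ^ r := by
        rw [hkmd, pow_add]; ring
    _ ≤ (N:ℝ) ^ m * (Real.exp m * (m:ℝ) ^ d) * 4 ^ k := by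
        apply mul_le_mul _ h4rk (by positivity) (by positivity)
        apply mul_le_mul_of_nonneg_left _ (by positivity)
        apply mul_le_mul_of_nonneg_right hexp (by positivity)
    _ ≤ (N:ℝ) ^ m * ((4:ℝ) ^ d * (m:ℝ) ^ d) * 16 ^ d := by
        apply mul_le_mul _ h4k16d (by positivity) (by positivity)
        apply mul_le_mul_of_nonneg_left _ (by positivity)
        apply mul_le_mul_of_nonneg_right hexpd (by positivity)
    _ = (N:ℝ) ^ m * ((64:ℝ) * m) ^ d := by
        rw [show ((64:ℝ) * m) ^ d = 4 ^ d * 16 ^ d * (m:ℝ) ^ d from by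
          rw [show (64:ℝ) = 4 * 16 by norm_num, mul_pow, mul_pow]]
        ring
    _ ≤ (N:ℝ) ^ m * (N:ℝ) ^ d := by
        apply mul_le_mul_of_nonneg_left _ (by positivity)
        apply pow_le_pow_left₀ (by positivity)
        exact_mod_cast hN
    _ = (N:ℝ) ^ k := by rw [hkmd, pow_add]

lemma gamma_bound (Γ r : ℕ) (hr : r = max (2 ^ 12) ⌈(136 : ℝ) * Real.log (16 * (Γ : ℝ))⌉₊) :
    (4:ℝ) * ((Γ:ℝ) + 1) ≤ 4 ^ r := by
  have hr1 : 1 ≤ r := by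
    rw [hr]; have := le_max_left (2^12) ⌈(136 : ℝ) * Real.log (16 * (Γ : ℝ))⌉₊; omega
  rcases Nat.eq_zero_or_pos Γ with rfl | hΓ
  · have : (4:ℝ) ^ 1 ≤ 4 ^ r := pow_le_pow_right₀ (by norm_num) hr1
    simpa using by linarith
  · have hΓ1 : (1:ℝ) ≤ Γ := by exact_mod_cast hΓ
    have h16Γ : (1:ℝ) ≤ 16 * Γ := by linarith
    have hlog0 : 0 ≤ Real.log (16 * (Γ:ℝ)) := Real.log_nonneg h16Γ
    have hceil : (136 : ℝ) * Real.log (16 * (Γ : ℝ)) ≤ r := by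
      calc (136 : ℝ) * Real.log (16 * (Γ : ℝ))
          ≤ (⌈(136 : ℝ) * Real.log (16 * (Γ : ℝ))⌉₊ : ℝ) := Nat.le_ceil _
        _ ≤ r := by
            have := le_max_right (2 ^ 12) ⌈(136 : ℝ) * Real.log (16 * (Γ : ℝ))⌉₊
            rw [hr]; exact_mod_cast this
    have hlogr : Real.log (16 * (Γ:ℝ)) ≤ r := by nlinarith
    have h1 : (16:ℝ) * Γ ≤ Real.exp r := by
      rw [← Real.exp_log (by linarith : (0:ℝ) < 16 * Γ)]
      exact Real.exp_le_exp.mpr hlogr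
    have h2 : Real.exp (r:ℝ) ≤ (4:ℝ) ^ r := exp_nat_le_four_pow r
    nlinarith

lemma bad_count {ι : Type} [Fintype ι] [DecidableEq ι] (N : ℕ) (s : Finset ι)
    (hm : s.card / 2 ≤ N) :
    (Finset.univ.filter fun ω : ι → Fin N =>
        ∀ x ∈ s, ∃ y ∈ s, y ≠ x ∧ ω y = ω x).card
      ≤ N.choose (s.card / 2)
          * ((s.card / 2) ^ s.card * N ^ (Fintype.card ι - s.card)) := by
  set m := s.card / 2 with hmdef
  have hsub : (Finset.univ.filter fun ω : ι → Fin N => ∀ x ∈ s, ∃ y ∈ s, y ≠ x ∧ ω y = ω x)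
      ⊆ (Finset.powersetCard m (Finset.univ : Finset (Fin N))).biUnion
          (fun T => Finset.univ.filter fun ω : ι → Fin N => ∀ x ∈ s, ω x ∈ T) := by
    intro ω hω
    rw [Finset.mem_filter] at hω
    obtain ⟨-, hω⟩ := hω
    have h2I : 2 * (s.image ω).card ≤ s.card := by
      have hfib := Finset.card_eq_sum_card_fiberwise
        (f := ω) (s := s) (t := s.image ω) (fun x hx => Finset.mem_image_of_mem ω hx)
      have hge : ∀ b ∈ s.image ω, 2 ≤ (s.filter fun x => ω x = b).card := by
        intro b hb
        rw [Finset.mem_image] at hb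
        obtain ⟨x, hx, rfl⟩ := hb
        obtain ⟨y, hy, hyx, hωy⟩ := hω x hx
        apply Finset.one_lt_card.mpr
        refine ⟨x, ?_, y, ?_, fun h => hyx h.symm⟩
        · exact Finset.mem_filter.mpr ⟨hx, rfl⟩
        · exact Finset.mem_filter.mpr ⟨hy, hωy⟩
      calc 2 * (s.image ω).card = ∑ _b ∈ s.image ω, 2 := by
            rw [Finset.sum_const, smul_eq_mul]; ring
        _ ≤ ∑ b ∈ s.image ω, (s.filter fun x => ω x = b).card := Finset.sum_le_sum hge
        _ = s.card := hfib.symm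
    have hI : (s.image ω).card ≤ m := by omega
    obtain ⟨T, hIT, hTcard⟩ := Finset.exists_superset_card_eq hI (by simpa using hm)
    rw [Finset.mem_biUnion]
    refine ⟨T, ?_, ?_⟩
    · rw [Finset.mem_powersetCard]
      exact ⟨Finset.subset_univ _, hTcard⟩
    · exact Finset.mem_filter.mpr ⟨Finset.mem_univ _,
        fun x hx => hIT (Finset.mem_image_of_mem ω hx)⟩
  apply le_trans (Finset.card_le_card hsub)
  apply le_trans Finset.card_biUnion_le
  have hcardT : ∀ T ∈ Finset.powersetCard m (Finset.univ : Finset (Fin N)),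
      (Finset.univ.filter fun ω : ι → Fin N => ∀ x ∈ s, ω x ∈ T).card
        = m ^ s.card * N ^ (Fintype.card ι - s.card) := by
    intro T hT
    rw [Finset.mem_powersetCard] at hT
    have hpi : (Finset.univ.filter fun ω : ι → Fin N => ∀ x ∈ s, ω x ∈ T)
        = Fintype.piFinset (fun i => if i ∈ s then T else Finset.univ) := by
      ext ω
      simp only [Finset.mem_filter, Finset.mem_univ, true_and, Fintype.mem_piFinset]
      constructor
      · intro h i
        by_cases hi : i ∈ s
        · simpa [hi] using h i hi
        · simp [hi]
      · intro h x hx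
        have := h x
        rwa [if_pos hx] at this
    rw [hpi, Fintype.card_piFinset]
    rw [← Finset.prod_filter_mul_prod_filter_not Finset.univ (· ∈ s)]
    have e1 : (∏ i ∈ Finset.univ.filter (· ∈ s), (if i ∈ s then T else Finset.univ).card)
        = m ^ s.card := by
      rw [Finset.prod_congr rfl (fun i hi => by rw [if_pos (Finset.mem_filter.mp hi).2])]
      rw [Finset.prod_const, Finset.filter_univ_mem, hT.2]
    have e2 : (∏ i ∈ Finset.univ.filter (fun i => ¬ i ∈ s),
          (if i ∈ s then T else Finset.univ).card)
        = N ^ (Fintype.card ι - s.card) := by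
      rw [Finset.prod_congr rfl (fun i hi => by rw [if_neg (Finset.mem_filter.mp hi).2])]
      rw [Finset.prod_const]
      congr 1
      · simp
      · rw [Finset.filter_not, Finset.filter_univ_mem, Finset.card_sdiff_of_subset (Finset.subset_univ s),
          Finset.card_univ]
    rw [e1, e2]
  rw [Finset.sum_congr rfl hcardT, Finset.sum_const, Finset.card_powersetCard,
    Finset.card_univ, Fintype.card_fin, smul_eq_mul]

section Assemble

variable {V : Type} [DecidableEq V]

/-- Extension of a coloring of the vertex set `U` to all of `V`. -/
def extCol (U : Finset V) {N : ℕ} (hN : 0 < N) (ω : ↥U → Fin N) : V → Fin N :=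
  fun v => if h : v ∈ U then ω ⟨v, h⟩ else ⟨0, hN⟩

lemma extCol_coe (U : Finset V) {N : ℕ} (hN : 0 < N) (ω : ↥U → Fin N) (x : ↥U) :
    extCol U hN ω ↑x = ω x := by
  simp [extCol]

/-- The bad event for edge `E`: no vertex of `E` has a unique color. -/
def BadE (U : Finset V) {N : ℕ} (hN : 0 < N) (E : Finset V) : Finset (↥U → Fin N) :=
  Finset.univ.filter fun ω =>
    ¬ ∃ v ∈ E, ∀ u ∈ E, u ≠ v → extCol U hN ω u ≠ extCol U hN ω v

lemma mem_BadE {U : Finset V} {N : ℕ} {hN : 0 < N} {E : Finset V} {ω : ↥U → Fin N} :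
    ω ∈ BadE U hN E ↔ ¬ ∃ v ∈ E, ∀ u ∈ E, u ≠ v → extCol U hN ω u ≠ extCol U hN ω v := by
  simp [BadE]

lemma BadE_congr {U : Finset V} {N : ℕ} {hN : 0 < N} {E : Finset V} {ω σ : ↥U → Fin N}
    (h : ∀ u ∈ E, extCol U hN ω u = extCol U hN σ u) :
    ω ∈ BadE U hN E ↔ σ ∈ BadE U hN E := by
  rw [mem_BadE, mem_BadE]
  apply not_congr
  constructor
  · rintro ⟨v, hv, hp⟩
    exact ⟨v, hv, fun u hu hne => by
      rw [← h u hu, ← h v hv]; exact hp u hu hne⟩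
  · rintro ⟨v, hv, hp⟩
    exact ⟨v, hv, fun u hu hne => by
      rw [h u hu, h v hv]; exact hp u hu hne⟩

end Assemble

/-- A coloring `c` of the vertices of a hypergraph (given by its finite set `H` of
hyperedges) is conflict-free if every hyperedge contains a vertex whose color differs
from the colors of all other vertices of that hyperedge. -/
def IsCFHypergraphColoring {V α : Type} (H : Finset (Finset V)) (c : V → α) : Prop :=
  ∀ E ∈ H, ∃ v ∈ E, ∀ u ∈ E, u ≠ v → c u ≠ c v

/-- Let `H` be a hypergraph in which every hyperedge intersects at most
`Γ` other hyperedges, and every hyperedge `E` satisfies `r ≤ |E| ≤ c·r`, where `c ≥ 1` is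
an integer and `r = max(2^12, ⌈136·ln(16Γ)⌉)`. Then `H` has a conflict-free coloring
using at most `32·c·r` colors, i.e. `χ_CF(H) ≤ 32cr`. -/
theorem hypergraph_cf_coloring {V : Type} [DecidableEq V] (H : Finset (Finset V))
    (Γ c r : ℕ) (hc : 1 ≤ c)
    (hr : r = max (2 ^ 12) ⌈(136 : ℝ) * Real.log (16 * (Γ : ℝ))⌉₊)
    (hΓ : ∀ E ∈ H, (H.filter fun F => F ≠ E ∧ (F ∩ E).Nonempty).card ≤ Γ)
    (hsize : ∀ E ∈ H, r ≤ E.card ∧ E.card ≤ c * r) :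
    ∃ f : V → Fin (32 * c * r), IsCFHypergraphColoring H f := by
  classical
  have hr4096 : 4096 ≤ r := by
    rw [hr]; exact le_trans (by norm_num) (le_max_left _ _)
  have hr0 : 0 < r := by omega
  have hN0 : 0 < 32 * c * r := Nat.mul_pos (Nat.mul_pos (by norm_num) hc) hr0
  set N := 32 * c * r with hNdef
  set U : Finset V := H.sup id with hUdef
  have hEU : ∀ E ∈ H, E ⊆ U := fun E hE => Finset.le_sup (f := id) hE
  set Bad : Finset V → Finset (↥U → Fin N) := fun E => BadE U hN0 E with hBaddef
  have hcardΩ : Fintype.card (↥U → Fin N) = N ^ U.card := by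
    rw [Fintype.card_fun, Fintype.card_fin, Fintype.card_coe]
  have hpull : ∀ E ∈ H, ((Finset.univ.filter fun x : ↥U => ↑x ∈ E)).card = E.card := by
    intro E hE
    apply Finset.card_bij (fun (x : ↥U) _ => (↑x : V))
    · intro x hx; exact (Finset.mem_filter.mp hx).2
    · intro x hx y hy hxy; exact Subtype.ext hxy
    · intro u hu
      exact ⟨⟨u, hEU E hE hu⟩, Finset.mem_filter.mpr ⟨Finset.mem_univ _, hu⟩, rfl⟩
  have hΩ' : 0 < Fintype.card (↥U → Fin N) := by
    rw [hcardΩ]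
    exact pow_pos hN0 _
  have hind' : ∀ E ∈ H, ∀ S ⊆ H, (∀ F ∈ S, F ≠ E ∧ ¬ (F ∩ E).Nonempty) →
      (Bad E ∩ avoidSet Bad S).card * Fintype.card (↥U → Fin N)
        = (Bad E).card * (avoidSet Bad S).card := by
    intro E hE S hSH hgood
    have key := indep_count (X := Fin N)
      (s := Finset.univ.filter fun x : ↥U => ↑x ∈ E)
      (A := Bad E) (B := avoidSet Bad S) ?_ ?_
    · rw [Finset.card_univ] at key
      exact key
    · intro ω σ h
      apply BadE_congr
      intro u hu
      have huU : u ∈ U := hEU E hE hu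
      have e1 : extCol U hN0 ω u = ω ⟨u, huU⟩ := dif_pos huU
      have e2 : extCol U hN0 σ u = σ ⟨u, huU⟩ := dif_pos huU
      rw [e1, e2]
      exact h _ (Finset.mem_filter.mpr ⟨Finset.mem_univ _, hu⟩)
    · intro ω σ h
      have key2 : ∀ F ∈ S, (ω ∈ Bad F ↔ σ ∈ Bad F) := by
        intro F hF
        apply BadE_congr
        intro u hu
        have hFH : F ∈ H := hSH hF
        have huU : u ∈ U := hEU F hFH hu
        have hdisj := hgood F hF
        have huE : u ∉ E := fun huE => hdisj.2 ⟨u, Finset.mem_inter.mpr ⟨hu, huE⟩⟩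
        have e1 : extCol U hN0 ω u = ω ⟨u, huU⟩ := dif_pos huU
        have e2 : extCol U hN0 σ u = σ ⟨u, huU⟩ := dif_pos huU
        rw [e1, e2]
        apply h
        intro hmem
        exact huE (Finset.mem_filter.mp hmem).2
      rw [mem_avoidSet, mem_avoidSet]
      constructor
      · intro hall F hF
        exact (not_congr (key2 F hF)).mp (hall F hF)
      · intro hall F hF
        exact (not_congr (key2 F hF)).mpr (hall F hF)
  have hp' : ∀ E ∈ H, (Bad E).card * (4 * (Γ + 1)) ≤ Fintype.card (↥U → Fin N) := by
    intro E hE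
    obtain ⟨hk1, hk2⟩ := hsize E hE
    have hscard := hpull E hE
    have hkU : E.card ≤ U.card := Finset.card_le_card (hEU E hE)
    have h32k : 32 * E.card ≤ N := by
      rw [hNdef, mul_assoc]
      exact Nat.mul_le_mul_left 32 hk2
    have hmN : (Finset.univ.filter fun x : ↥U => ↑x ∈ E).card / 2 ≤ N := by
      rw [hscard]; omega
    have hsubbad : Bad E ⊆ Finset.univ.filter
        (fun ω : ↥U → Fin N => ∀ x ∈ (Finset.univ.filter fun x : ↥U => ↑x ∈ E),
          ∃ y ∈ (Finset.univ.filter fun x : ↥U => ↑x ∈ E), y ≠ x ∧ ω y = ω x) := by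
      intro ω hω
      rw [hBaddef] at hω
      rw [mem_BadE] at hω
      push_neg at hω
      rw [Finset.mem_filter]
      refine ⟨Finset.mem_univ _, ?_⟩
      intro x hx
      have hxE : ↑x ∈ E := (Finset.mem_filter.mp hx).2
      obtain ⟨u, hu, hune, heq⟩ := hω ↑x hxE
      refine ⟨⟨u, hEU E hE hu⟩, Finset.mem_filter.mpr ⟨Finset.mem_univ _, hu⟩, ?_, ?_⟩
      · intro hcontra
        exact hune (congrArg Subtype.val hcontra)
      · rw [← extCol_coe U hN0 ω ⟨u, hEU E hE hu⟩, ← extCol_coe U hN0 ω x]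
        exact heq
    have hcount := bad_count N (Finset.univ.filter fun x : ↥U => ↑x ∈ E) hmN
    have hbadle : (Bad E).card
        ≤ N.choose (E.card / 2) * ((E.card / 2) ^ E.card * N ^ (U.card - E.card)) := by
      have := le_trans (Finset.card_le_card hsubbad) hcount
      rwa [hscard, Fintype.card_coe] at this
    rw [hcardΩ]
    -- numeric part, in ℝ
    clear hsubbad hcount hind' hΩ' hpull hcardΩ hBaddef hEU
    have hnum := numeric_bound N E.card (E.card / 2) (E.card - E.card / 2) Γ r
      (by omega) (by omega) (by omega) hk1 (by omega) (gamma_bound Γ r hr)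
    have hcast : ((Bad E).card : ℝ) * (4 * ((Γ:ℝ) + 1)) ≤ (N:ℝ) ^ U.card := by
      have hb : ((Bad E).card : ℝ)
          ≤ (N.choose (E.card / 2) : ℝ) * (((E.card / 2 : ℕ):ℝ) ^ E.card * (N:ℝ) ^ (U.card - E.card)) := by
        exact_mod_cast hbadle
      calc ((Bad E).card : ℝ) * (4 * ((Γ:ℝ) + 1))
          ≤ ((N.choose (E.card / 2) : ℝ) * (((E.card / 2 : ℕ):ℝ) ^ E.card * (N:ℝ) ^ (U.card - E.card))) * (4 * ((Γ:ℝ) + 1)) := by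
            apply mul_le_mul_of_nonneg_right hb (by positivity)
        _ = ((N.choose (E.card / 2) : ℝ) * ((E.card / 2 : ℕ):ℝ) ^ E.card * (4 * ((Γ:ℝ) + 1))) * (N:ℝ) ^ (U.card - E.card) := by
            ring
        _ ≤ (N:ℝ) ^ E.card * (N:ℝ) ^ (U.card - E.card) := by
            apply mul_le_mul_of_nonneg_right hnum (by positivity)
        _ = (N:ℝ) ^ U.card := by
            rw [← pow_add]
            congr 1
            omega
    exact_mod_cast hcast
  obtain ⟨ω, hω⟩ := LLL_count H Bad Γ (fun E F => (F ∩ E).Nonempty) hΩ' hΓ hind' hp'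
  -- extract the coloring
  refine ⟨extCol U hN0 ω, ?_⟩
  intro E hE
  have h1 := hω E hE
  rw [hBaddef] at h1
  have h2 : ¬ ¬ ∃ v ∈ E, ∀ u ∈ E, u ≠ v → extCol U hN0 ω u ≠ extCol U hN0 ω v :=
    fun hn => h1 (mem_BadE.mpr hn)
  exact not_not.mp h2
end

section
/- Let G be a graph whose vertex set is partitioned as V(G) = X ⊎ Y with X, Y nonempty, such that (i) every vertex of G has at most d_X neighbors in X, (ii) every vertex of Y has at least one neighbor in X, and (iii) every vertex of X has at most d_Y neighbors in Y. Then there is a coloring of the vertices of X using at most d_X·d_Y + d_X − d_Y + 1 colors such that every vertex in Y sees some color exactly once among its neighbors in X (i.e., for every y ∈ Y there is a color assigned to exactly one vertex of N_G(y) ∩ X). -/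
/-- Greedy coloring: a symmetric irreflexive relation whose "degrees" are all `< n`
admits a proper coloring with `n` colors. -/
lemma greedy_coloring {V : Type} [Fintype V] [DecidableEq V]
    (R : V → V → Prop) [DecidableRel R]
    (hsymm : ∀ u v, R u v → R v u) (hirr : ∀ v, ¬ R v v)
    (n : ℕ) (hn : 0 < n)
    (hdeg : ∀ v : V, (Finset.univ.filter (R v)).card < n) :
    ∃ c : V → Fin n, ∀ u v, R u v → c u ≠ c v := by
  have key : ∀ s : Finset V, ∃ c : V → Fin n,
      ∀ u ∈ s, ∀ v ∈ s, R u v → c u ≠ c v := by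
    intro s
    induction s using Finset.induction_on with
    | empty => exact ⟨fun _ => ⟨0, hn⟩, by simp⟩
    | insert a s ha ih =>
      obtain ⟨c, hc⟩ := ih
      have hcard : ((s.filter (R a)).image c).card < n := by
        calc ((s.filter (R a)).image c).card ≤ (s.filter (R a)).card :=
              Finset.card_image_le
          _ ≤ (Finset.univ.filter (R a)).card :=
              Finset.card_le_card (Finset.filter_subset_filter _ (Finset.subset_univ s))
          _ < n := hdeg a
      have hne : (((s.filter (R a)).image c)ᶜ : Finset (Fin n)).Nonempty := by
        rw [← Finset.card_pos, Finset.card_compl, Fintype.card_fin]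
        omega
      obtain ⟨b, hb'⟩ := hne
      have hb : b ∉ (s.filter (R a)).image c := Finset.mem_compl.mp hb'
      refine ⟨Function.update c a b, ?_⟩
      intro u hu v hv huv
      rcases Finset.mem_insert.mp hu with rfl | hu'
      · rcases Finset.mem_insert.mp hv with rfl | hv'
        · exact absurd huv (hirr _)
        · have hvne : v ≠ u := fun h => ha (h ▸ hv')
          rw [Function.update_self, Function.update_of_ne hvne]
          intro h
          exact hb (Finset.mem_image.mpr ⟨v, Finset.mem_filter.mpr ⟨hv', huv⟩, h.symm⟩)
      · rcases Finset.mem_insert.mp hv with rfl | hv'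
        · have hune : u ≠ v := fun h => ha (h ▸ hu')
          rw [Function.update_self, Function.update_of_ne hune]
          intro h
          exact hb (Finset.mem_image.mpr ⟨u, Finset.mem_filter.mpr ⟨hu', hsymm _ _ huv⟩, h⟩)
        · have hune : u ≠ a := fun h => ha (h ▸ hu')
          have hvne : v ≠ a := fun h => ha (h ▸ hv')
          rw [Function.update_of_ne hune, Function.update_of_ne hvne]
          exact hc u hu' v hv' huv
  obtain ⟨c, hc⟩ := key Finset.univ
  exact ⟨c, fun u v h => hc u (Finset.mem_univ u) v (Finset.mem_univ v) h⟩

/-- Let `G` be a graph with `V(G) = X ⊎ Y`, `X, Y` nonempty, such that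
every vertex of `G` has at most `dX` neighbors in `X`, every vertex of `Y` has at least
one neighbor in `X`, and every vertex of `X` has at most `dY` neighbors in `Y`. Then the
vertices of `X` can be colored with `dX·dY + dX − dY + 1` colors so that every vertex of
`Y` sees some color exactly once among its neighbors in `X`. -/
theorem coloring_X_seen_once_from_Y {V : Type} [Fintype V] [DecidableEq V]
    (G : SimpleGraph V) [DecidableRel G.Adj] (X Y : Finset V) (dX dY : ℕ)
    (hpart : X ∪ Y = Finset.univ) (hdisj : Disjoint X Y)
    (hX : X.Nonempty) (hY : Y.Nonempty)
    (h1 : ∀ v : V, (G.neighborFinset v ∩ X).card ≤ dX)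
    (h2 : ∀ y ∈ Y, ∃ x ∈ X, G.Adj y x)
    (h3 : ∀ x ∈ X, (G.neighborFinset x ∩ Y).card ≤ dY) :
    ∃ c : V → Fin (dX * dY + dX - dY + 1),
      ∀ y ∈ Y, ∃ a, ((G.neighborFinset y ∩ X).filter fun u => c u = a).card = 1 := by
  classical
  -- dX ≥ 1 and dY ≥ 1
  obtain ⟨y₀, hy₀⟩ := hY
  obtain ⟨x₀, hx₀X, hx₀adj⟩ := h2 y₀ hy₀
  have hdX : 1 ≤ dX := by
    have : x₀ ∈ G.neighborFinset y₀ ∩ X := by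
      simp [SimpleGraph.mem_neighborFinset, hx₀adj, hx₀X]
    calc 1 ≤ (G.neighborFinset y₀ ∩ X).card := Finset.card_pos.mpr ⟨x₀, this⟩
      _ ≤ dX := h1 y₀
  have hdY : 1 ≤ dY := by
    have : y₀ ∈ G.neighborFinset x₀ ∩ Y := by
      simp [SimpleGraph.mem_neighborFinset, hx₀adj.symm, hy₀]
    calc 1 ≤ (G.neighborFinset x₀ ∩ Y).card := Finset.card_pos.mpr ⟨y₀, this⟩
      _ ≤ dY := h3 x₀ hx₀X
  -- the conflict relation on X
  set n := dX * dY + dX - dY + 1 with hn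
  set R : V → V → Prop := fun u v =>
    u ≠ v ∧ u ∈ X ∧ v ∈ X ∧ ∃ y ∈ Y, G.Adj y u ∧ G.Adj y v with hR
  have hsymm : ∀ u v, R u v → R v u := by
    rintro u v ⟨hne, hu, hv, y, hy, h₁, h₂⟩
    exact ⟨hne.symm, hv, hu, y, hy, h₂, h₁⟩
  have hirr : ∀ v, ¬ R v v := fun v h => h.1 rfl
  -- degree bound for R
  have hdeg : ∀ v : V, (Finset.univ.filter (R v)).card < n := by
    intro v
    by_cases hvX : v ∈ X
    · have hsub : Finset.univ.filter (R v) ⊆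
          (G.neighborFinset v ∩ Y).biUnion
            (fun y => (G.neighborFinset y ∩ X).erase v) := by
        intro u hu
        obtain ⟨hne, hv', hu', y, hy, hadj₁, hadj₂⟩ := (Finset.mem_filter.mp hu).2
        refine Finset.mem_biUnion.mpr ⟨y, ?_, ?_⟩
        · simp [SimpleGraph.mem_neighborFinset, hadj₁.symm, hy]
        · exact Finset.mem_erase.mpr ⟨hne.symm,
            by simp [SimpleGraph.mem_neighborFinset, hadj₂, hu']⟩
      have hb : ((G.neighborFinset v ∩ Y).biUnion
          (fun y => (G.neighborFinset y ∩ X).erase v)).card ≤ dY * (dX - 1) := by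
        have hstep : ∀ y ∈ G.neighborFinset v ∩ Y,
            ((G.neighborFinset y ∩ X).erase v).card ≤ dX - 1 := by
          intro y hy
          have hvy : v ∈ G.neighborFinset y ∩ X := by
            simp only [Finset.mem_inter, SimpleGraph.mem_neighborFinset] at hy ⊢
            exact ⟨hy.1.symm, hvX⟩
          calc ((G.neighborFinset y ∩ X).erase v).card
              = (G.neighborFinset y ∩ X).card - 1 := Finset.card_erase_of_mem hvy
            _ ≤ dX - 1 := Nat.sub_le_sub_right (h1 y) 1
        calc ((G.neighborFinset v ∩ Y).biUnion
              (fun y => (G.neighborFinset y ∩ X).erase v)).card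
            ≤ (G.neighborFinset v ∩ Y).card * (dX - 1) :=
              Finset.card_biUnion_le_card_mul _ _ _ hstep
          _ ≤ dY * (dX - 1) := Nat.mul_le_mul_right _ (h3 v hvX)
      have hcard := (Finset.card_le_card hsub).trans hb
      have hkey : dY * (dX - 1) + dY = dY * dX := by
        conv_rhs => rw [← Nat.sub_add_cancel hdX]
        ring
      have hm : dY * dX = dX * dY := Nat.mul_comm _ _
      omega
    · have : Finset.univ.filter (R v) = ∅ := by
        refine Finset.filter_false_of_mem ?_
        rintro u - ⟨-, hv', -, -⟩
        exact hvX hv'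
      rw [this]
      simp [hn]
  obtain ⟨c, hc⟩ := greedy_coloring R hsymm hirr n (by omega) hdeg
  refine ⟨c, fun y hy => ?_⟩
  obtain ⟨x, hxX, hxadj⟩ := h2 y hy
  refine ⟨c x, ?_⟩
  have hset : (G.neighborFinset y ∩ X).filter (fun u => c u = c x) = {x} := by
    ext u
    simp only [Finset.mem_filter, Finset.mem_singleton, Finset.mem_inter,
      SimpleGraph.mem_neighborFinset]
    constructor
    · rintro ⟨⟨hadj, huX⟩, hcu⟩
      by_contra hne
      exact hc u x ⟨hne, huX, hxX, y, hy, hadj, hxadj⟩ hcu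
    · rintro rfl
      exact ⟨⟨hxadj, hxX⟩, rfl⟩
  rw [hset]
  exact Finset.card_singleton x
end

section
/- Let G be a graph whose vertex set is partitioned as V(G) = X ⊎ Y with X, Y nonempty, such that (i) every vertex of Y has at most t_X neighbors in X, and (ii) every vertex of X has at least one neighbor in Y. Then there is a coloring of the vertices of Y using at most t_X + 1 colors such that every vertex in X sees some color exactly once among its neighbors in Y (i.e., for every x ∈ X there is a color assigned to exactly one vertex of N_G(x) ∩ Y). -/
section Aux

variable {V : Type} [Fintype V] [DecidableEq V] [LinearOrder V]
variable (G : SimpleGraph V) [DecidableRel G.Adj] (X Y : Finset V)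

/-- The "edge" of `x` : its neighbors in `Y`. -/
def cfEdge (x : V) : Finset V := G.neighborFinset x ∩ Y

/-- Representative of the edge of `x`: its minimum (or `x` itself if empty). -/
def cfRep (x : V) : V :=
  if h : (cfEdge G Y x).Nonempty then (cfEdge G Y x).min' h else x

/-- Vertices `x ∈ X` whose edge contains `v` with representative different from `v`. -/
def cfForb (v : V) : Finset V :=
  (G.neighborFinset v ∩ X).filter
    (fun x => v ∈ Y ∧ (cfEdge G Y x).Nonempty ∧ cfRep G Y x ≠ v)

lemma cfRep_lt {v x : V} (hx : x ∈ cfForb G X Y v) : cfRep G Y x < v := by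
  simp only [cfForb, Finset.mem_filter, Finset.mem_inter] at hx
  obtain ⟨⟨hvx, _⟩, hvY, hne, hrep⟩ := hx
  have hv : v ∈ cfEdge G Y x := by
    simp [cfEdge, Finset.mem_inter, SimpleGraph.mem_neighborFinset, hvY,
      (SimpleGraph.mem_neighborFinset G v x).1 hvx |>.symm]
  have := Finset.min'_le _ v hv
  rw [cfRep, dif_pos hne] at hrep ⊢
  exact lt_of_le_of_ne this hrep

lemma cf_avail (tX : ℕ) (h1 : ∀ y ∈ Y, (G.neighborFinset y ∩ X).card ≤ tX) (v : V) (f : ∀ u, u < v → Fin (tX + 1)) :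
    (Finset.univ \ (cfForb G X Y v).attach.image
      (fun x => f (cfRep G Y x.1) (cfRep_lt G X Y x.2))).Nonempty := by
  rw [Finset.sdiff_nonempty]
  intro hsub
  have hcard := Finset.card_le_card hsub
  have h3 : ((cfForb G X Y v).attach.image
    (fun x => f (cfRep G Y x.1) (cfRep_lt G X Y x.2))).card ≤ (cfForb G X Y v).card := by
    refine le_trans (Finset.card_image_le) ?_
    simp
  have h4 : (cfForb G X Y v).card ≤ tX := by
    by_cases hvY : v ∈ Y
    · exact le_trans (Finset.card_le_card (Finset.filter_subset _ _)) (h1 v hvY)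
    · have : cfForb G X Y v = ∅ := by
        apply Finset.filter_false_of_mem
        intro x _ h
        exact (hvY h.1).elim
      simp [this]
  have : (tX + 1) ≤ tX := by
    calc tX + 1 = (Finset.univ : Finset (Fin (tX + 1))).card := by simp
    _ ≤ _ := hcard
    _ ≤ _ := le_trans h3 h4
  omega

set_option maxHeartbeats 1000000 in
/-- The greedy conflict-free coloring. -/
noncomputable def cfCol (tX : ℕ) (h1 : ∀ y ∈ Y, (G.neighborFinset y ∩ X).card ≤ tX) : V → Fin (tX + 1) :=
  WellFounded.fix wellFounded_lt
    (fun v (ih : ∀ u, u < v → Fin (tX + 1)) =>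
      have hne := cf_avail G X Y tX h1 v ih
      Finset.min' _ hne)

set_option maxHeartbeats 1000000 in
lemma cfCol_spec (tX : ℕ) (h1 : ∀ y ∈ Y, (G.neighborFinset y ∩ X).card ≤ tX) (v : V) {x : V} (hx : x ∈ cfForb G X Y v) :
    cfCol G X Y tX h1 v ≠ cfCol G X Y tX h1 (cfRep G Y x) := by
  have heq := WellFounded.fix_eq wellFounded_lt
    (fun v (ih : ∀ u, u < v → Fin (tX + 1)) =>
      have hne := cf_avail G X Y tX h1 v ih
      Finset.min' _ hne) v
  have hmem : cfCol G X Y tX h1 v ∈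
      (Finset.univ \ (cfForb G X Y v).attach.image
        (fun x => cfCol G X Y tX h1 (cfRep G Y x.1))) := by
    rw [cfCol, heq]
    exact Finset.min'_mem _ _
  rw [Finset.mem_sdiff] at hmem
  intro hc
  exact hmem.2 (Finset.mem_image.2 ⟨⟨x, hx⟩, Finset.mem_attach _ _, hc.symm⟩)

end Aux

/-- Let `G` be a graph with `V(G) = X ⊎ Y`, `X, Y` nonempty, such that
every vertex of `Y` has at most `tX` neighbors in `X`, and every vertex of `X` has at
least one neighbor in `Y`. Then the vertices of `Y` can be colored with at most `tX + 1`
colors so that every vertex of `X` sees some color exactly once among its neighbors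
in `Y`. -/
theorem coloring_Y_seen_once_from_X {V : Type} [Fintype V] [DecidableEq V]
    (G : SimpleGraph V) [DecidableRel G.Adj] (X Y : Finset V) (tX : ℕ)
    (hpart : X ∪ Y = Finset.univ) (hdisj : Disjoint X Y)
    (hX : X.Nonempty) (hY : Y.Nonempty)
    (h1 : ∀ y ∈ Y, (G.neighborFinset y ∩ X).card ≤ tX)
    (h2 : ∀ x ∈ X, ∃ y ∈ Y, G.Adj x y) :
    ∃ c : V → Fin (tX + 1),
      ∀ x ∈ X, ∃ a, ((G.neighborFinset x ∩ Y).filter fun u => c u = a).card = 1 := by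
  letI : LinearOrder V := LinearOrder.lift' (Fintype.equivFin V) (Equiv.injective _)
  refine ⟨cfCol G X Y tX h1, fun x hxX => ?_⟩
  have hne : (cfEdge G Y x).Nonempty := by
    obtain ⟨y, hyY, hadj⟩ := h2 x hxX
    exact ⟨y, by simp [cfEdge, SimpleGraph.mem_neighborFinset, hadj, hyY]⟩
  set r := cfRep G Y x with hr
  have hrmem : r ∈ cfEdge G Y x := by
    rw [hr, cfRep, dif_pos hne]; exact Finset.min'_mem _ _
  refine ⟨cfCol G X Y tX h1 r, ?_⟩
  have hfilter : ((G.neighborFinset x ∩ Y).filter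
      fun u => cfCol G X Y tX h1 u = cfCol G X Y tX h1 r) = {r} := by
    ext u
    simp only [Finset.mem_filter, Finset.mem_singleton]
    constructor
    · rintro ⟨hu, hcu⟩
      by_contra hur
      have hxforb : x ∈ cfForb G X Y u := by
        rw [Finset.mem_inter] at hu
        simp only [cfForb, Finset.mem_filter, Finset.mem_inter]
        refine ⟨⟨?_, hxX⟩, hu.2, hne, fun h => hur (by rw [← h, hr])⟩
        rw [SimpleGraph.mem_neighborFinset] at hu ⊢
        exact hu.1.symm
      exact cfCol_spec G X Y tX h1 u hxforb hcu
    · rintro rfl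
      exact ⟨hrmem, rfl⟩
  rw [hfilter, Finset.card_singleton]
end

section
/- Let Γ ≥ 1 and let c ≥ 1 be an integer, and set r = max(2^12, ⌈136·ln(16Γ)⌉). Let E be a finite set of n elements with r ≤ n ≤ c·r, each assigned a color chosen independently and uniformly at random from a set of 32·c·r colors. Then the probability that every element of E has its color assigned to at least one other element of E (i.e., no color appears exactly once in E) is at most 1/(4Γ). -/
open Finset

private lemma pow_self_le_aux : ∀ k : ℕ, (k : ℝ) ^ k ≤ 3 ^ k * (Nat.factorial k : ℝ) := by
  intro k
  induction k with
  | zero => norm_num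
  | succ k ih =>
    push_cast
    rcases Nat.eq_zero_or_pos k with hk | hk
    · subst hk; norm_num
    have hk' : (0:ℝ) < k := by exact_mod_cast hk
    have hexp3 : Real.exp 1 ≤ 3 := by
      have := Real.exp_one_lt_d9; linarith
    have h1 : ((k:ℝ)+1) ^ k ≤ 3 * (k:ℝ)^k := by
      have e1 : ((k:ℝ)+1) = k * (1 + 1/k) := by field_simp
      have e2 : (1 + 1/(k:ℝ)) ^ k ≤ Real.exp 1 := by
        calc (1 + 1/(k:ℝ)) ^ k ≤ (Real.exp (1/k)) ^ k := by
              apply pow_le_pow_left₀ (by positivity)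
              linarith [Real.add_one_le_exp (1/(k:ℝ))]
          _ = Real.exp (k * (1/k)) := by rw [← Real.exp_nat_mul]
          _ = Real.exp 1 := by rw [mul_one_div, div_self (ne_of_gt hk')]
      calc ((k:ℝ)+1)^k = (k:ℝ)^k * (1+1/(k:ℝ))^k := by rw [e1, mul_pow]
        _ ≤ (k:ℝ)^k * Real.exp 1 :=
            mul_le_mul_of_nonneg_left e2 (by positivity)
        _ ≤ (k:ℝ)^k * 3 := mul_le_mul_of_nonneg_left hexp3 (by positivity)
        _ = 3 * (k:ℝ)^k := by ring
    have hfact : (Nat.factorial (k+1) : ℝ) = (k+1) * (Nat.factorial k : ℝ) := by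
      rw [Nat.factorial_succ]; push_cast; ring
    have hpos : (0:ℝ) ≤ (k:ℝ) + 1 := by positivity
    calc ((k:ℝ)+1) ^ (k+1) = ((k:ℝ)+1) * ((k:ℝ)+1)^k := by ring
      _ ≤ ((k:ℝ)+1) * (3 * (k:ℝ)^k) := mul_le_mul_of_nonneg_left h1 hpos
      _ ≤ ((k:ℝ)+1) * (3 * (3^k * (Nat.factorial k : ℝ))) := by
          apply mul_le_mul_of_nonneg_left _ hpos
          apply mul_le_mul_of_nonneg_left ih (by norm_num)
      _ = 3 ^ (k+1) * (((k:ℝ)+1) * (Nat.factorial k : ℝ)) := by ring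
      _ = 3 ^ (k+1) * (Nat.factorial (k+1) : ℝ) := by rw [hfact]

private lemma image_card_le_half {n N : ℕ} (f : Fin n → Fin N)
    (hf : ∀ i, ∃ j, j ≠ i ∧ f j = f i) : (univ.image f).card ≤ n / 2 := by
  classical
  have key : ∀ b ∈ univ.image f, 2 ≤ (univ.filter fun i => f i = b).card := by
    intro b hb
    obtain ⟨i, -, hi⟩ := mem_image.1 hb
    obtain ⟨j, hji, hj⟩ := hf i
    have hsub : ({j, i} : Finset (Fin n)) ⊆ univ.filter fun x => f x = b := by
      intro x hx
      simp only [mem_insert, mem_singleton] at hx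
      rcases hx with rfl | rfl
      · simp [hj, hi]
      · simp [hi]
    calc 2 = ({j, i} : Finset (Fin n)).card := by
          rw [card_insert_of_notMem (by simpa using hji), card_singleton]
      _ ≤ _ := card_le_card hsub
  have hsum : (univ : Finset (Fin n)).card
      = ∑ b ∈ univ.image f, (univ.filter fun i => f i = b).card :=
    card_eq_sum_card_fiberwise (fun i _ => mem_image_of_mem f (mem_univ i))
  have h2 : 2 * (univ.image f).card ≤ n := by
    calc 2 * (univ.image f).card = ∑ _b ∈ univ.image f, 2 := by
          rw [sum_const, smul_eq_mul, mul_comm]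
      _ ≤ ∑ b ∈ univ.image f, (univ.filter fun i => f i = b).card := sum_le_sum key
      _ = n := by rw [← hsum, card_univ, Fintype.card_fin]
  omega

private lemma count_small_image (n N m : ℕ) (hm : m ≤ N) :
    ((univ.filter fun f : Fin n → Fin N => (univ.image f).card ≤ m).card)
      ≤ N.choose m * m ^ n := by
  classical
  have hsub : (univ.filter fun f : Fin n → Fin N => (univ.image f).card ≤ m)
      ⊆ (univ.powersetCard m).biUnion (fun S => Fintype.piFinset fun _ : Fin n => S) := by
    intro f hf
    simp only [mem_filter] at hf
    obtain ⟨S, hS1, hS2⟩ := Finset.exists_superset_card_eq hf.2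
      (by simpa using hm)
    refine mem_biUnion.2 ⟨S, ?_, ?_⟩
    · simp [mem_powersetCard, hS2]
    · simp only [Fintype.mem_piFinset]
      intro i; exact hS1 (mem_image_of_mem f (mem_univ i))
  calc _ ≤ ((univ.powersetCard m).biUnion
        (fun S => Fintype.piFinset fun _ : Fin n => S)).card := card_le_card hsub
    _ ≤ ∑ S ∈ univ.powersetCard m, (Fintype.piFinset fun _ : Fin n => S).card :=
        card_biUnion_le
    _ = ∑ S ∈ univ.powersetCard m, m ^ n := by
        refine sum_congr rfl fun S hS => ?_
        rw [Fintype.card_piFinset_const, (mem_powersetCard.1 hS).2]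
    _ = N.choose m * m ^ n := by
        rw [sum_const, card_powersetCard, card_univ, Fintype.card_fin, smul_eq_mul]

/-- Let `Γ ≥ 1`, let `c ≥ 1` be an integer, and set
`r = max(2^12, ⌈136·ln(16Γ)⌉)`. Let `n` elements with `r ≤ n ≤ c·r` each be assigned a
color chosen independently and uniformly at random from `32·c·r` colors (modelled by the
uniform distribution over all functions `Fin n → Fin (32·c·r)`). Then the probability
that no color appears exactly once — i.e., every element's color is also assigned to some
other element — is at most `1/(4Γ)`. -/
theorem prob_no_unique_color_le (Γ : ℝ) (hΓ : 1 ≤ Γ) (c : ℕ) (hc : 1 ≤ c) (r n : ℕ)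
    (hr : r = max (2 ^ 12) ⌈(136 : ℝ) * Real.log (16 * Γ)⌉₊)
    (hn1 : r ≤ n) (hn2 : n ≤ c * r) :
    ((univ.filter fun f : Fin n → Fin (32 * c * r) =>
        ∀ i : Fin n, ∃ j : Fin n, j ≠ i ∧ f j = f i).card : ℝ)
      / (((32 * c * r : ℕ) : ℝ) ^ n) ≤ 1 / (4 * Γ) := by
  classical
  set N := 32 * c * r with hN
  obtain ⟨m, hmdef⟩ : ∃ m, m = n / 2 := ⟨_, rfl⟩
  -- basic numeric facts
  have hr4096 : 4096 ≤ r := by rw [hr]; exact le_max_left _ _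
  have hn4096 : 4096 ≤ n := le_trans hr4096 hn1
  have h32n : 32 * n ≤ N := by
    rw [hN, mul_assoc]; exact Nat.mul_le_mul_left _ hn2
  have hmn : 2 * m ≤ n := by omega
  have h64m : 64 * m ≤ N := by omega
  have hmN : m ≤ N := by omega
  have hmn' : m ≤ n := by omega
  have hNpos : 0 < N := by omega
  have hNr : (0:ℝ) < (N:ℝ) := by exact_mod_cast hNpos
  have hΓpos : (0:ℝ) < 4 * Γ := by linarith
  -- step 1: event count bounded by small-image count
  have hstep1 : (univ.filter fun f : Fin n → Fin N =>
        ∀ i : Fin n, ∃ j : Fin n, j ≠ i ∧ f j = f i).card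
      ≤ N.choose m * m ^ n := by
    refine le_trans (card_le_card ?_) (count_small_image n N m hmN)
    intro f hf
    simp only [mem_filter] at hf ⊢
    exact ⟨hf.1, by rw [hmdef]; exact image_card_le_half f hf.2⟩
  -- step 2: real-number estimate
  have hcount : ((univ.filter fun f : Fin n → Fin N =>
        ∀ i : Fin n, ∃ j : Fin n, j ≠ i ∧ f j = f i).card : ℝ)
      ≤ (N.choose m : ℝ) * (m:ℝ) ^ n := by
    calc ((univ.filter fun f : Fin n → Fin N =>
          ∀ i : Fin n, ∃ j : Fin n, j ≠ i ∧ f j = f i).card : ℝ)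
        ≤ ((N.choose m * m ^ n : ℕ) : ℝ) := by exact_mod_cast hstep1
      _ = (N.choose m : ℝ) * (m:ℝ) ^ n := by push_cast; ring
  have hfactpos : (0:ℝ) < (Nat.factorial m : ℝ) := by
    exact_mod_cast Nat.factorial_pos m
  have hchoose : (N.choose m : ℝ) ≤ (N:ℝ) ^ m / (Nat.factorial m : ℝ) := by
    have := Nat.choose_le_pow_div m N (α := ℝ)
    push_cast at this ⊢
    exact this
  have hmm : (m:ℝ) ^ m / (Nat.factorial m : ℝ) ≤ 3 ^ m := by
    rw [div_le_iff₀ hfactpos]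
    exact pow_self_le_aux m
  -- combine: choose * m^n ≤ 3^m * m^(n-m) * N^m
  have hkey : (N.choose m : ℝ) * (m:ℝ) ^ n
      ≤ 3 ^ m * (m:ℝ) ^ (n - m) * (N:ℝ) ^ m := by
    have hmsplit : (m:ℝ) ^ n = (m:ℝ) ^ (n - m) * (m:ℝ) ^ m := by
      rw [← pow_add]; congr 1; clear hstep1; omega
    calc (N.choose m : ℝ) * (m:ℝ) ^ n
        ≤ ((N:ℝ) ^ m / (Nat.factorial m : ℝ)) * (m:ℝ) ^ n := by
          have hnn : (0:ℝ) ≤ (m:ℝ) ^ n := by positivity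
          exact mul_le_mul_of_nonneg_right hchoose hnn
      _ = (N:ℝ) ^ m * (m:ℝ) ^ (n - m) * ((m:ℝ) ^ m / (Nat.factorial m : ℝ)) := by
          rw [hmsplit]; ring
      _ ≤ (N:ℝ) ^ m * (m:ℝ) ^ (n - m) * 3 ^ m := by
          have hnn : (0:ℝ) ≤ (N:ℝ) ^ m * (m:ℝ) ^ (n - m) := by positivity
          exact mul_le_mul_of_nonneg_left hmm hnn
      _ = 3 ^ m * (m:ℝ) ^ (n - m) * (N:ℝ) ^ m := by ring
  -- divide by N^n
  have hNn : (N:ℝ) ^ n = (N:ℝ) ^ (n - m) * (N:ℝ) ^ m := by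
    rw [← pow_add]; congr 1; clear hstep1; omega
  have hfrac : 3 ^ m * (m:ℝ) ^ (n - m) * (N:ℝ) ^ m / (N:ℝ) ^ n
      = 3 ^ m * ((m:ℝ) / (N:ℝ)) ^ (n - m) := by
    rw [hNn, div_pow]
    field_simp
  have hestim : 3 ^ m * ((m:ℝ) / (N:ℝ)) ^ (n - m) ≤ ((1:ℝ)/16) ^ m := by
    have hdiv : (m:ℝ) / (N:ℝ) ≤ 1/64 := by
      rw [div_le_div_iff₀ hNr (by norm_num)]
      have : (64 * m : ℕ) ≤ N := h64m
      have := (Nat.cast_le (α := ℝ)).2 this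
      push_cast at this
      linarith
    have h1 : ((m:ℝ) / (N:ℝ)) ^ (n - m) ≤ (1/64 : ℝ) ^ (n - m) :=
      pow_le_pow_left₀ (by positivity) hdiv _
    have h2 : ((1:ℝ)/64) ^ (n - m) ≤ ((1:ℝ)/64) ^ m := by
      apply pow_le_pow_of_le_one (by norm_num) (by norm_num)
      clear hstep1; omega
    calc 3 ^ m * ((m:ℝ) / (N:ℝ)) ^ (n - m)
        ≤ 3 ^ m * ((1:ℝ)/64) ^ m := by
          have hnn : (0:ℝ) ≤ (3:ℝ) ^ m := by positivity
          exact mul_le_mul_of_nonneg_left (le_trans h1 h2) hnn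
      _ = ((3:ℝ)/64) ^ m := by rw [← mul_pow]; norm_num
      _ ≤ ((1:ℝ)/16) ^ m := by
          apply pow_le_pow_left₀ (by norm_num)
          norm_num
  -- final: (1/16)^m ≤ 1/(4Γ)
  have hlogΓ : (0:ℝ) ≤ Real.log (16 * Γ) := Real.log_nonneg (by linarith)
  have hrlog : 136 * Real.log (16 * Γ) ≤ (r:ℝ) := by
    calc 136 * Real.log (16 * Γ) ≤ (⌈(136:ℝ) * Real.log (16 * Γ)⌉₊ : ℝ) :=
          Nat.le_ceil _
      _ ≤ (r:ℝ) := by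
          have : ⌈(136:ℝ) * Real.log (16 * Γ)⌉₊ ≤ r := by rw [hr]; exact le_max_right _ _
          exact_mod_cast this
  have hmr : (r:ℝ) / 4 ≤ (m:ℝ) := by
    have h1 : r / 2 ≤ m := by rw [hmdef]; exact Nat.div_le_div_right hn1
    have h2 : (r:ℝ) ≤ 2 * ((r/2 : ℕ) : ℝ) + 1 := by
      have hnat : r ≤ 2 * (r / 2) + 1 := by clear hstep1; omega
      exact_mod_cast hnat
    have h3 : ((r/2 : ℕ) : ℝ) ≤ (m:ℝ) := by exact_mod_cast h1
    have hr' : (4096:ℝ) ≤ (r:ℝ) := by exact_mod_cast hr4096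
    linarith
  have hlog16 : (2:ℝ) ≤ Real.log 16 := by
    rw [Real.le_log_iff_exp_le (by norm_num)]
    have h := Real.exp_one_lt_d9
    have he : Real.exp 2 = Real.exp 1 * Real.exp 1 := by
      rw [← Real.exp_add]; norm_num
    have hp : (0:ℝ) < Real.exp 1 := Real.exp_pos 1
    nlinarith
  have hfinal : (4:ℝ) * Γ ≤ 16 ^ m := by
    have hmlog : Real.log (16 * Γ) ≤ (m:ℝ) * Real.log 16 := by
      have hm34 : 34 * Real.log (16 * Γ) ≤ (m:ℝ) := by linarith
      have hlogpos : (0:ℝ) ≤ Real.log 16 := by linarith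
      nlinarith
    calc (4:ℝ) * Γ ≤ 16 * Γ := by linarith
      _ = Real.exp (Real.log (16 * Γ)) := by
          rw [Real.exp_log (by linarith)]
      _ ≤ Real.exp ((m:ℝ) * Real.log 16) := Real.exp_le_exp.2 hmlog
      _ = Real.exp (Real.log 16) ^ m := Real.exp_nat_mul _ m
      _ = 16 ^ m := by rw [Real.exp_log (by norm_num)]
  have hlast : ((1:ℝ)/16) ^ m ≤ 1 / (4 * Γ) := by
    rw [one_div_pow, div_le_div_iff₀ (by positivity) hΓpos]
    linarith [hfinal]
  -- put everything together
  have hNnpos : (0:ℝ) < (N:ℝ) ^ n := by positivity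
  calc ((univ.filter fun f : Fin n → Fin N =>
        ∀ i : Fin n, ∃ j : Fin n, j ≠ i ∧ f j = f i).card : ℝ) / ((N:ℕ):ℝ) ^ n
      ≤ ((N.choose m : ℝ) * (m:ℝ) ^ n) / (N:ℝ) ^ n :=
        div_le_div_of_nonneg_right hcount hNnpos.le
    _ ≤ (3 ^ m * (m:ℝ) ^ (n - m) * (N:ℝ) ^ m) / (N:ℝ) ^ n :=
        div_le_div_of_nonneg_right hkey hNnpos.le
    _ = 3 ^ m * ((m:ℝ) / (N:ℝ)) ^ (n - m) := hfrac
    _ ≤ ((1:ℝ)/16) ^ m := hestim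
    _ ≤ 1 / (4 * Γ) := hlast
end
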